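/- Assume the deletion scenario. Let t, u ∈ V(E) be mutually visible with respect to E (the obstacle set after the deletion of v). Then t and u are mutually visible with respect to E₁ = (E \ {[vᵢ, vᵢ₊₁]}) ∪ {[v, vᵢ], [v, vᵢ₊₁]} (the obstacle set before the deletion) if and only if openSegment ℝ t u is disjoint from T. (This is the claim of Section 5.2 of the paper: the visibility-graph edges created by deleting the vertex v are exactly the pairs of vertices, mutually visible afterwards, whose open segment intersects the triangle v vᵢ vᵢ₊₁.) -/

import Mathlib

open Set

/-- Points of the plane. -/
abbrev Pt := EuclideanSpace ℝ (Fin 2)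

/-- `x` is an endpoint of the (nondegenerate) closed segment `s`. -/
def IsSegEndpoint (x : Pt) (s : Set Pt) : Prop :=
  ∃ a b : Pt, a ≠ b ∧ s = segment ℝ a b ∧ (x = a ∨ x = b)

/-- An obstacle set: a finite set of nondegenerate closed segments such that any two
distinct segments intersect at most in a point that is a common endpoint of both. -/
def IsObstacleSet (E : Set (Set Pt)) : Prop :=
  E.Finite ∧
  (∀ s ∈ E, ∃ a b : Pt, a ≠ b ∧ s = segment ℝ a b) ∧
  (∀ s ∈ E, ∀ t ∈ E, s ≠ t → ∀ x ∈ s ∩ t, IsSegEndpoint x s ∧ IsSegEndpoint x t)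

/-- `V(E)`: the set of all endpoints of segments of `E`. -/
def Vset (E : Set (Set Pt)) : Set Pt := {x | ∃ s ∈ E, IsSegEndpoint x s}

/-- Two points `p ≠ q` are mutually visible with respect to `E` if the open segment
joining them is disjoint from every segment of `E`. -/
def MutuallyVisible (E : Set (Set Pt)) (p q : Pt) : Prop :=
  p ≠ q ∧ ∀ s ∈ E, openSegment ℝ p q ∩ s = ∅

/-- The cone at `q` spanned by `a` and `b`. -/
def Cone (q a b : Pt) : Set Pt :=
  {x | ∃ s t : ℝ, 0 ≤ s ∧ 0 ≤ t ∧ x = q + s • (a - q) + t • (b - q)}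

lemma openSegment_right_subset' {t u x : Pt} (hx : x ∈ openSegment ℝ t u) :
    openSegment ℝ x u ⊆ openSegment ℝ t u := by
  obtain ⟨a, b, ha, hb, hab, rfl⟩ := hx
  rintro z ⟨c, d, hc, hd, hcd, rfl⟩
  refine ⟨c * a, c * b + d, by positivity, by positivity, by nlinarith, ?_⟩
  module

lemma exists_frontier_pt' {T : Set Pt} (hT : IsClosed T) {x w : Pt}
    (hx : x ∈ interior T) (hw : w ∉ T) : ∃ y ∈ openSegment ℝ x w, y ∈ frontier T := by
  by_contra h
  push_neg at h
  have hsub : segment ℝ x w ⊆ interior T ∪ Tᶜ := by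
    intro z hz
    rw [← insert_endpoints_openSegment] at hz
    rcases hz with rfl | rfl | hz
    · exact Or.inl hx
    · exact Or.inr hw
    · by_cases hzT : z ∈ T
      · exact Or.inl (by
          by_contra hzi
          exact h z hz ⟨subset_closure hzT, hzi⟩)
      · exact Or.inr hzT
  obtain ⟨z, hzs, hzi, hzc⟩ := (convex_segment x w).isPreconnected _ _ isOpen_interior
    hT.isOpen_compl hsub ⟨x, left_mem_segment ℝ x w, hx⟩ ⟨w, right_mem_segment ℝ x w, hw⟩
  exact hzc (interior_subset hzi)

lemma mem_sUnion_of_vset {E : Set (Set Pt)} {x : Pt} (hx : x ∈ Vset E) : x ∈ ⋃₀ E := by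
  obtain ⟨s, hsE, a, b, hab, rfl, h⟩ := hx
  rcases h with rfl | rfl
  · exact ⟨_, hsE, left_mem_segment ℝ x b⟩
  · exact ⟨_, hsE, right_mem_segment ℝ a x⟩

theorem stmt_8
    (E : Set (Set Pt)) (v vi vi1 : Pt)
    (hind : AffineIndependent ℝ ![v, vi, vi1])
    (hE : IsObstacleSet E)
    (hbase : segment ℝ vi vi1 ∈ E)
    (hT : convexHull ℝ ({v, vi, vi1} : Set Pt) ∩ ⋃₀ E = segment ℝ vi vi1)
    (t u : Pt) (ht : t ∈ Vset E) (hu : u ∈ Vset E)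
    (htu : MutuallyVisible E t u) :
    MutuallyVisible ((E \ {segment ℝ vi vi1}) ∪ {segment ℝ v vi, segment ℝ v vi1}) t u ↔
      openSegment ℝ t u ∩ convexHull ℝ ({v, vi, vi1} : Set Pt) = ∅ := by
  set T : Set Pt := convexHull ℝ ({v, vi, vi1} : Set Pt) with hTdef
  have hvmem : v ∈ ({v, vi, vi1} : Set Pt) := by simp
  have hvimem : vi ∈ ({v, vi, vi1} : Set Pt) := by simp
  have hvi1mem : vi1 ∈ ({v, vi, vi1} : Set Pt) := by simp
  have hside1T : segment ℝ v vi ⊆ T := segment_subset_convexHull hvmem hvimem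
  have hside2T : segment ℝ v vi1 ⊆ T := segment_subset_convexHull hvmem hvi1mem
  have hbaseT : segment ℝ vi vi1 ⊆ T := segment_subset_convexHull hvimem hvi1mem
  have hs1mem : segment ℝ v vi ∈ (E \ {segment ℝ vi vi1}) ∪ {segment ℝ v vi, segment ℝ v vi1} :=
    Or.inr (by left; rfl)
  have hs2mem : segment ℝ v vi1 ∈ (E \ {segment ℝ vi vi1}) ∪ {segment ℝ v vi, segment ℝ v vi1} :=
    Or.inr (by right; rfl)
  constructor
  · -- hard direction
    rintro ⟨-, h1⟩
    -- basis setup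
    have htot : affineSpan ℝ (Set.range ![v, vi, vi1]) = ⊤ := by
      rw [hind.affineSpan_eq_top_iff_card_eq_finrank_add_one]
      simp
    set b : AffineBasis (Fin 3) ℝ Pt := ⟨![v, vi, vi1], hind, htot⟩ with hbdef
    have hr : Set.range ![v, vi, vi1] = ({v, vi, vi1} : Set Pt) := by
      ext z; simp [Matrix.range_cons, Matrix.range_empty]; tauto
    have hb : ⇑b = ![v, vi, vi1] := rfl
    have hhull : T = {x | ∀ i, 0 ≤ b.coord i x} := by
      rw [hTdef, ← hr, ← hb, b.convexHull_eq_nonneg_coord]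
    have hint : interior T = {x | ∀ i, 0 < b.coord i x} := by
      rw [hTdef, ← hr, ← hb, b.interior_convexHull]
    have hrep : ∀ z : Pt, z = b.coord 0 z • v + b.coord 1 z • vi + b.coord 2 z • vi1 := by
      intro z
      have h := b.affineCombination_coord_eq_self z
      rw [Finset.univ.affineCombination_eq_linear_combination _ _
        (b.sum_coord_apply_eq_one z)] at h
      rw [Fin.sum_univ_three] at h
      simpa [hb] using h.symm
    have hsum : ∀ z : Pt, b.coord 0 z + b.coord 1 z + b.coord 2 z = 1 := by
      intro z
      have := b.sum_coord_apply_eq_one z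
      rwa [Fin.sum_univ_three] at this
    -- points of T with a zero coordinate lie on an edge
    have hedge : ∀ z ∈ T, z ∈ segment ℝ vi vi1 ∪ segment ℝ v vi ∪ segment ℝ v vi1 ∨
        z ∈ interior T := by
      intro z hz
      have hnn : ∀ i, 0 ≤ b.coord i z := by rwa [hhull] at hz
      by_cases hpos : ∀ i, 0 < b.coord i z
      · exact Or.inr (by rwa [hint])
      · push_neg at hpos
        obtain ⟨i, hi⟩ := hpos
        have hi0 : b.coord i z = 0 := le_antisymm hi (hnn i)
        left
        have hs := hsum z
        have hz' := hrep z
        fin_cases i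
        · left; left
          replace hi0 : b.coord 0 z = 0 := hi0
          rw [hi0, zero_smul, zero_add] at hz'
          rw [hi0] at hs
          exact ⟨_, _, hnn 1, hnn 2, by linarith, hz'.symm⟩
        · right
          replace hi0 : b.coord 1 z = 0 := hi0
          rw [hi0, zero_smul, add_zero] at hz'
          rw [hi0] at hs
          exact ⟨_, _, hnn 0, hnn 2, by linarith, hz'.symm⟩
        · left; right
          replace hi0 : b.coord 2 z = 0 := hi0
          rw [hi0, zero_smul, add_zero] at hz'
          rw [hi0] at hs
          exact ⟨_, _, hnn 0, hnn 1, by linarith, hz'.symm⟩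
    -- suppose some point of the open segment lies in T
    by_contra hne
    obtain ⟨x, hxo, hxT⟩ := nonempty_iff_ne_empty.2 hne
    have hno : ∀ z ∈ openSegment ℝ t u,
        z ∉ segment ℝ vi vi1 ∪ segment ℝ v vi ∪ segment ℝ v vi1 := by
      intro z hz hmem
      rcases hmem with (hm | hm) | hm
      · have hzm : z ∈ openSegment ℝ t u ∩ segment ℝ vi vi1 := ⟨hz, hm⟩
        rw [htu.2 _ hbase] at hzm
        exact hzm
      · have hzm : z ∈ openSegment ℝ t u ∩ segment ℝ v vi := ⟨hz, hm⟩
        rw [h1 _ hs1mem] at hzm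
        exact hzm
      · have hzm : z ∈ openSegment ℝ t u ∩ segment ℝ v vi1 := ⟨hz, hm⟩
        rw [h1 _ hs2mem] at hzm
        exact hzm
    have hxint : x ∈ interior T := by
      rcases hedge x hxT with hm | hm
      · exact absurd hm (hno x hxo)
      · exact hm
    have hTclosed : IsClosed T :=
      (((Set.finite_singleton vi1).insert vi).insert v).isClosed_convexHull (𝕜 := ℝ)
    -- t and u cannot both be in T
    have hkey : ∀ w : Pt, w ∈ Vset E → w ∈ T → w ∈ segment ℝ vi vi1 := by
      intro w hw hwT
      have : w ∈ T ∩ ⋃₀ E := ⟨hwT, mem_sUnion_of_vset hw⟩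
      rwa [hT] at this
    have hout : u ∉ T ∨ t ∉ T := by
      by_contra hc
      push_neg at hc
      have htb := hkey t ht hc.2
      have hub := hkey u hu hc.1
      have : x ∈ segment ℝ vi vi1 :=
        (convex_segment vi vi1).segment_subset htb hub (openSegment_subset_segment ℝ t u hxo)
      exact hno x hxo (Or.inl (Or.inl this))
    obtain ⟨y, hyo, hyf⟩ : ∃ y ∈ openSegment ℝ t u, y ∈ frontier T := by
      rcases hout with hw | hw
      · obtain ⟨y, hy1, hy2⟩ := exists_frontier_pt' hTclosed hxint hw
        exact ⟨y, openSegment_right_subset' hxo hy1, hy2⟩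
      · obtain ⟨y, hy1, hy2⟩ := exists_frontier_pt' hTclosed hxint hw
        have hxo' : x ∈ openSegment ℝ u t := by rwa [openSegment_symm]
        have := openSegment_right_subset' hxo' hy1
        rw [openSegment_symm ℝ u t] at this
        exact ⟨y, this, hy2⟩
    rw [hTclosed.frontier_eq] at hyf
    rcases hedge y hyf.1 with hm | hm
    · exact hno y hyo hm
    · exact hyf.2 hm
  · -- easy direction
    intro hdisj
    refine ⟨htu.1, ?_⟩
    rintro s (⟨hsE, -⟩ | hs)
    · exact htu.2 s hsE
    · rcases hs with rfl | rfl
      · exact eq_empty_of_subset_empty (hdisj ▸ inter_subset_inter_right _ hside1T)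
      · exact eq_empty_of_subset_empty (hdisj ▸ inter_subset_inter_right _ hside2T)
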